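/- Let s₁ and s₂ be related strings of length n. The minimum size of a common partition of s₁ and s₂ equals n − M, where M is the maximum of Σ_{b∈T}(t_b − 1) over all finite sets T of blocks of (s₁, s₂) with each t_b ≥ 2 such that any two distinct blocks in T do not overlap (the maximum is taken over all such T, including T = ∅). -/

import Mathlib

/-- A common partition of strings `s₁` and `s₂`: a multiset of nonempty strings
(represented by the two orderings `P₁`, `P₂`, which are permutations of each other)
whose concatenations are `s₁` and `s₂` respectively. -/
def CommonPartition {α : Type*} (s₁ s₂ : List α) (P₁ P₂ : List (List α)) : Prop :=
  P₁.Perm P₂ ∧ (∀ p ∈ P₁, p ≠ []) ∧ P₁.flatten = s₁ ∧ P₂.flatten = s₂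

/-- A block of the pair of strings `(s₁, s₂)`: a triple `(k¹, k², t)` with `t ≥ 1`,
`k¹ + t ≤ |s₁|`, `k² + t ≤ |s₂|`, and the substring of `s₁` of length `t` starting at
`k¹` equals the substring of `s₂` of length `t` starting at `k²`. -/
def IsBlock {α : Type*} (s₁ s₂ : List α) (b : ℕ × ℕ × ℕ) : Prop :=
  1 ≤ b.2.2 ∧ b.1 + b.2.2 ≤ s₁.length ∧ b.2.1 + b.2.2 ≤ s₂.length ∧
    (s₁.drop b.1).take b.2.2 = (s₂.drop b.2.1).take b.2.2

/-- Blocks `bᵢ = (kᵢ¹, kᵢ², tᵢ)` and `b_j = (k_j¹, k_j², t_j)` overlap if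
`kᵢ¹ − t_j < k_j¹ < kᵢ¹ + tᵢ` or `kᵢ² − t_j < k_j² < kᵢ² + tᵢ` (over the integers). -/
def Overlap (bi bj : ℕ × ℕ × ℕ) : Prop :=
  ((bi.1 : ℤ) - bj.2.2 < bj.1 ∧ (bj.1 : ℤ) < bi.1 + bi.2.2) ∨
  ((bi.2.1 : ℤ) - bj.2.2 < bj.2.1 ∧ (bj.2.1 : ℤ) < bi.2.1 + bi.2.2)

namespace MCSPAux

variable {α : Type*}

/-- Separation of placed pieces. -/
def SepP (x y : ℕ × List α) : Prop := x.1 + x.2.length ≤ y.1 ∨ y.1 + y.2.length ≤ x.1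

lemma sepP_symm {x y : ℕ × List α} (h : SepP x y) : SepP y x := h.symm

lemma noOverlap_of_sep {b b' : ℕ × ℕ × ℕ}
    (h1 : b.1 + b.2.2 ≤ b'.1 ∨ b'.1 + b'.2.2 ≤ b.1)
    (h2 : b.2.1 + b.2.2 ≤ b'.2.1 ∨ b'.2.1 + b'.2.2 ≤ b.2.1) :
    ¬ Overlap b b' ∧ ¬ Overlap b' b := by
  unfold Overlap; omega

lemma pairwise_middle {S : ℕ × List α → ℕ × List α → Prop} {L R : List (ℕ × List α)}
    {y : ℕ × List α} (h : (L ++ y :: R).Pairwise S) :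
    ∀ z ∈ L ++ R, S y z ∨ S z y := by
  rw [List.pairwise_append] at h
  intro z hz
  rcases List.mem_append.1 hz with hz | hz
  · exact Or.inr (h.2.2 z hz y (List.mem_cons_self))
  · exact Or.inl ((List.pairwise_cons.1 h.2.1).1 z hz)

/-- Core lemma: matched placements of permuted pieces yield non-overlapping blocks. -/
lemma core (s₁ s₂ : List α) :
    ∀ (A B : List (ℕ × List α)),
      (A.map Prod.snd).Perm (B.map Prod.snd) →
      (∀ x ∈ A, x.2 ≠ []) →
      (∀ x ∈ A, x.1 + x.2.length ≤ s₁.length ∧ (s₁.drop x.1).take x.2.length = x.2) →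
      (∀ x ∈ B, x.1 + x.2.length ≤ s₂.length ∧ (s₂.drop x.1).take x.2.length = x.2) →
      A.Pairwise SepP → B.Pairwise SepP →
      ∃ T : Finset (ℕ × ℕ × ℕ),
        (∀ b ∈ T, IsBlock s₁ s₂ b ∧ 2 ≤ b.2.2) ∧
        (∀ b ∈ T, ∀ b' ∈ T, b ≠ b' → ¬ Overlap b b') ∧
        (∀ b ∈ T, (∃ x ∈ A, b.1 = x.1 ∧ b.2.2 = x.2.length) ∧
                  (∃ x ∈ B, b.2.1 = x.1 ∧ b.2.2 = x.2.length)) ∧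
        ∑ b ∈ T, (b.2.2 - 1) = (A.map (fun x => x.2.length - 1)).sum := by
  intro A
  induction A with
  | nil => intro B _ _ _ _ _ _; exact ⟨∅, by simp, by simp, by simp, by simp⟩
  | cons x A' ih =>
    intro B hperm hne hpl1 hpl2 hpwA hpwB
    obtain ⟨k₁, p⟩ := x
    have hpB : p ∈ B.map Prod.snd := hperm.mem_iff.1 (List.mem_cons_self)
    obtain ⟨y, hyB, hyp⟩ := List.mem_map.1 hpB
    obtain ⟨L, R, hBeq⟩ := List.mem_iff_append.1 hyB
    have hperm' : (A'.map Prod.snd).Perm ((L ++ R).map Prod.snd) := by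
      have h1 : (B.map Prod.snd).Perm (p :: (L ++ R).map Prod.snd) := by
        rw [hBeq]; simp only [List.map_append, List.map_cons, hyp]
        exact List.perm_middle
      exact (hperm.trans h1).cons_inv
    have hmemB' : ∀ z ∈ L ++ R, z ∈ B := by
      intro z hz; rw [hBeq]
      rcases List.mem_append.1 hz with h | h
      · exact List.mem_append.2 (Or.inl h)
      · exact List.mem_append.2 (Or.inr (List.mem_cons_of_mem _ h))
    have hpwB' : (L ++ R).Pairwise SepP := by
      refine hpwB.sublist ?_
      rw [hBeq]; exact (List.sublist_cons_self y R).append_left L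
    have hsepB : ∀ z ∈ L ++ R, SepP y z := by
      intro z hz
      rcases pairwise_middle (hBeq ▸ hpwB) z hz with h | h
      · exact h
      · exact sepP_symm h
    obtain ⟨T', hT1, hT2, hT3, hTsum⟩ := ih (L ++ R) hperm'
      (fun z hz => hne z (List.mem_cons_of_mem _ hz))
      (fun z hz => hpl1 z (List.mem_cons_of_mem _ hz))
      (fun z hz => hpl2 z (hmemB' z hz))
      (List.pairwise_cons.1 hpwA).2 hpwB'
    have hsepA : ∀ z ∈ A', SepP (k₁, p) z := (List.pairwise_cons.1 hpwA).1
    have hplen : 1 ≤ p.length := by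
      have := hne (k₁, p) (List.mem_cons_self)
      simpa [Nat.one_le_iff_ne_zero, List.length_eq_zero_iff] using this
    by_cases hp2 : 2 ≤ p.length
    · -- add the block (k₁, y.1, p.length)
      set b : ℕ × ℕ × ℕ := (k₁, y.1, p.length) with hb
      have hbnotin : b ∉ T' := by
        intro hmem
        obtain ⟨⟨x', hx'A', he1, he2⟩, -⟩ := hT3 b hmem
        have hs : k₁ + p.length ≤ x'.1 ∨ x'.1 + x'.2.length ≤ k₁ := hsepA x' hx'A'
        simp only [hb] at he1 he2
        omega
      have hIsB : IsBlock s₁ s₂ b := by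
        obtain ⟨hl1, he1⟩ := hpl1 (k₁, p) (List.mem_cons_self)
        obtain ⟨hl2, he2⟩ := hpl2 y hyB
        refine ⟨hplen, ?_, ?_, ?_⟩
        · simpa using hl1
        · simpa [hyp] using hl2
        · simp only [hb]
          rw [he1]; rw [hyp] at he2; rw [he2]
      have hbnoov : ∀ b' ∈ T', ¬ Overlap b b' ∧ ¬ Overlap b' b := by
        intro b' hb'
        obtain ⟨⟨x', hx'A', he1, he2⟩, ⟨y', hy'B', hf1, hf2⟩⟩ := hT3 b' hb'
        have hs1 : k₁ + p.length ≤ x'.1 ∨ x'.1 + x'.2.length ≤ k₁ := hsepA x' hx'A'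
        have hs2 : y.1 + p.length ≤ y'.1 ∨ y'.1 + y'.2.length ≤ y.1 := by
          have := hsepB y' hy'B'
          simpa [SepP, hyp] using this
        refine noOverlap_of_sep ?_ ?_
        · simp only [hb]; omega
        · simp only [hb]; omega
      refine ⟨insert b T', ?_, ?_, ?_, ?_⟩
      · intro c hc
        rcases Finset.mem_insert.1 hc with rfl | hc
        · exact ⟨hIsB, hp2⟩
        · exact hT1 c hc
      · intro c hc c' hc' hcc'
        rcases Finset.mem_insert.1 hc with rfl | hc <;>
          rcases Finset.mem_insert.1 hc' with rfl | hc'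
        · exact absurd rfl hcc'
        · exact (hbnoov c' hc').1
        · exact (hbnoov c hc).2
        · exact hT2 c hc c' hc' hcc'
      · intro c hc
        rcases Finset.mem_insert.1 hc with rfl | hc
        · exact ⟨⟨(k₁, p), List.mem_cons_self, rfl, rfl⟩,
            ⟨y, hyB, rfl, by simp [hb, hyp]⟩⟩
        · obtain ⟨⟨x', hx', he⟩, ⟨y', hy', hf⟩⟩ := hT3 c hc
          exact ⟨⟨x', List.mem_cons_of_mem _ hx', he⟩, ⟨y', hmemB' y' hy', hf⟩⟩
      · rw [Finset.sum_insert hbnotin, hTsum]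
        simp [hb]
    · -- p has length 1: skip
      refine ⟨T', hT1, hT2, ?_, ?_⟩
      · intro c hc
        obtain ⟨⟨x', hx', he⟩, ⟨y', hy', hf⟩⟩ := hT3 c hc
        exact ⟨⟨x', List.mem_cons_of_mem _ hx', he⟩, ⟨y', hmemB' y' hy', hf⟩⟩
      · rw [hTsum]
        simp only [List.map_cons, List.sum_cons]
        omega


def withStarts : ℕ → List (List α) → List (ℕ × List α)
  | _, [] => []
  | o, p :: P => (o, p) :: withStarts (o + p.length) P

lemma withStarts_map_snd (o : ℕ) (P : List (List α)) :
    (withStarts o P).map Prod.snd = P := by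
  induction P generalizing o with
  | nil => rfl
  | cons p P ih => simp [withStarts, ih]

lemma withStarts_lb (o : ℕ) (P : List (List α)) :
    ∀ x ∈ withStarts o P, o ≤ x.1 := by
  induction P generalizing o with
  | nil => simp [withStarts]
  | cons p P ih =>
    intro x hx
    rcases hx with _ | ⟨_, hx⟩
    · rfl
    · exact le_trans (Nat.le_add_right _ _) (ih (o + p.length) x hx)

lemma withStarts_pairwise (o : ℕ) (P : List (List α)) :
    (withStarts o P).Pairwise SepP := by
  induction P generalizing o with
  | nil => exact List.Pairwise.nil
  | cons p P ih =>
    refine List.pairwise_cons.2 ⟨?_, ih _⟩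
    intro x hx
    exact Or.inl (withStarts_lb _ _ x hx)

lemma withStarts_placed (s : List α) (o : ℕ) (P : List (List α))
    (h : s.drop o = P.flatten) (hne : ∀ p ∈ P, p ≠ []) :
    ∀ x ∈ withStarts o P, x.1 + x.2.length ≤ s.length ∧ (s.drop x.1).take x.2.length = x.2 := by
  induction P generalizing o with
  | nil => simp [withStarts]
  | cons p P ih =>
    have hlen : s.length - o = p.length + P.flatten.length := by
      have := congrArg List.length h
      simpa using this
    have hp1 : 1 ≤ p.length := by
      have := hne p (List.mem_cons_self)
      simpa [Nat.one_le_iff_ne_zero, List.length_eq_zero_iff] using this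
    intro x hx
    rcases hx with _ | ⟨_, hx⟩
    · constructor
      · simp only; omega
      · simp only
        rw [h]
        simp
    · have hdrop : s.drop (o + p.length) = P.flatten := by
        have h2 : s.drop (o + p.length) = (s.drop o).drop p.length := by
          rw [List.drop_drop, Nat.add_comm]
        rw [h2, h]; simp
      exact ih (o + p.length) hdrop (fun q hq => hne q (List.mem_cons_of_mem _ hq)) x hx

lemma sum_len_sub_one (P : List (List α)) (hne : ∀ p ∈ P, p ≠ []) :
    (P.map (fun p => p.length - 1)).sum + P.length = (P.map List.length).sum := by
  induction P with
  | nil => simp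
  | cons p P ih =>
    have hp1 : 1 ≤ p.length := by
      have := hne p (List.mem_cons_self)
      simpa [Nat.one_le_iff_ne_zero, List.length_eq_zero_iff] using this
    have := ih (fun q hq => hne q (List.mem_cons_of_mem _ hq))
    simp only [List.map_cons, List.sum_cons, List.length_cons]
    omega

/-- Direction A: a common partition yields non-overlapping blocks of total saving n - m. -/
lemma partition_to_blocks (s₁ s₂ : List α) (P₁ P₂ : List (List α))
    (h : CommonPartition s₁ s₂ P₁ P₂) :
    ∃ T : Finset (ℕ × ℕ × ℕ),
      (∀ b ∈ T, IsBlock s₁ s₂ b ∧ 2 ≤ b.2.2) ∧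
      (∀ b ∈ T, ∀ b' ∈ T, b ≠ b' → ¬ Overlap b b') ∧
      (∑ b ∈ T, (b.2.2 - 1)) + P₁.length = s₁.length := by
  obtain ⟨hperm, hne, hf1, hf2⟩ := h
  have hne2 : ∀ p ∈ P₂, p ≠ [] := fun p hp => hne p (hperm.mem_iff.2 hp)
  obtain ⟨T, hT1, hT2, _, hTsum⟩ := core s₁ s₂ (withStarts 0 P₁) (withStarts 0 P₂)
    (by rw [withStarts_map_snd, withStarts_map_snd]; exact hperm)
    (by
      intro x hx
      apply hne
      have : x.2 ∈ (withStarts 0 P₁).map Prod.snd := List.mem_map_of_mem (f := Prod.snd) hx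
      rwa [withStarts_map_snd] at this)
    (withStarts_placed s₁ 0 P₁ (by simpa using hf1.symm) hne)
    (withStarts_placed s₂ 0 P₂ (by simpa using hf2.symm) hne2)
    (withStarts_pairwise _ _) (withStarts_pairwise _ _)
  refine ⟨T, hT1, hT2, ?_⟩
  have hmap : ((withStarts 0 P₁).map (fun x => x.2.length - 1)).sum
      = (P₁.map (fun p => p.length - 1)).sum := by
    have : (withStarts 0 P₁).map (fun x => x.2.length - 1)
        = ((withStarts 0 P₁).map Prod.snd).map (fun p => p.length - 1) := by
      rw [List.map_map]; rfl
    rw [this, withStarts_map_snd]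
  rw [hTsum, hmap]
  have := sum_len_sub_one P₁ hne
  have hlen : (P₁.map List.length).sum = s₁.length := by
    rw [← hf1, List.length_flatten]
  omega


lemma flatten_map_singleton (l : List α) : (l.map ([·])).flatten = l := by
  induction l with
  | nil => rfl
  | cons a l ih => simp [ih]

def cutL (s : List α) : ℕ → List (ℕ × ℕ) → List (List α)
  | i, [] => (s.drop i).map ([·])
  | i, (k, t) :: L => ((s.drop i).take (k - i)).map ([·]) ++ ((s.drop k).take t) :: cutL s (k + t) L

def uncov (s : List α) : ℕ → List (ℕ × ℕ) → List α
  | i, [] => s.drop i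
  | i, (k, t) :: L => (s.drop i).take (k - i) ++ uncov s (k + t) L

lemma cutL_length (s : List α) (L : List (ℕ × ℕ)) : ∀ i : ℕ, i ≤ s.length →
    (∀ x ∈ L, x.1 + x.2 ≤ s.length ∧ 1 ≤ x.2) → (∀ x ∈ L, i ≤ x.1) →
    L.Pairwise (fun x y => x.1 + x.2 ≤ y.1) →
    (cutL s i L).length + (L.map (fun x => x.2 - 1)).sum = s.length - i := by
  induction L with
  | nil => intro i hi _ _ _; simp [cutL]
  | cons x L ih =>
    obtain ⟨k, t⟩ := x
    intro i hi hmem hlb hpw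
    obtain ⟨hkt, ht⟩ := hmem (k, t) (List.mem_cons_self)
    have hik : i ≤ k := hlb (k, t) (List.mem_cons_self)
    have hrec := ih (k + t) (by omega)
      (fun x hx => hmem x (List.mem_cons_of_mem _ hx))
      (fun x hx => (List.pairwise_cons.1 hpw).1 x hx)
      (List.pairwise_cons.1 hpw).2
    simp only [cutL, List.length_append, List.length_map, List.length_take,
      List.length_drop, List.length_cons, List.map_cons, List.sum_cons]
    omega

lemma cutL_flatten (s : List α) (L : List (ℕ × ℕ)) : ∀ i : ℕ,
    (∀ x ∈ L, x.1 + x.2 ≤ s.length) → (∀ x ∈ L, i ≤ x.1) →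
    L.Pairwise (fun x y => x.1 + x.2 ≤ y.1) →
    (cutL s i L).flatten = s.drop i := by
  induction L with
  | nil => intro i _ _ _; simp only [cutL]; exact flatten_map_singleton _
  | cons x L ih =>
    obtain ⟨k, t⟩ := x
    intro i hmem hlb hpw
    have hkt := hmem (k, t) (List.mem_cons_self)
    have hik : i ≤ k := hlb (k, t) (List.mem_cons_self)
    have hrec := ih (k + t)
      (fun x hx => hmem x (List.mem_cons_of_mem _ hx))
      (fun x hx => (List.pairwise_cons.1 hpw).1 x hx)
      (List.pairwise_cons.1 hpw).2
    have e1 : (s.drop i).drop (k - i) = s.drop k := by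
      rw [List.drop_drop]; congr 1; omega
    have e2 : (s.drop k).drop t = s.drop (k + t) := by
      rw [List.drop_drop]
    conv_rhs => rw [← List.take_append_drop (k - i) (s.drop i), e1,
      ← List.take_append_drop t (s.drop k), e2]
    simp only [cutL, List.flatten_append, List.flatten_cons, flatten_map_singleton, hrec]

lemma cutL_ne_nil (s : List α) (L : List (ℕ × ℕ)) : ∀ i : ℕ,
    (∀ x ∈ L, x.1 + x.2 ≤ s.length ∧ 1 ≤ x.2) →
    ∀ p ∈ cutL s i L, p ≠ [] := by
  induction L with
  | nil =>
    intro i _ p hp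
    simp only [cutL] at hp
    obtain ⟨a, _, rfl⟩ := List.mem_map.1 hp
    simp
  | cons x L ih =>
    obtain ⟨k, t⟩ := x
    intro i hmem p hp
    obtain ⟨hkt, ht⟩ := hmem (k, t) (List.mem_cons_self)
    simp only [cutL, List.mem_append, List.mem_cons] at hp
    rcases hp with hp | hp | hp
    · obtain ⟨a, _, rfl⟩ := List.mem_map.1 hp; simp
    · subst hp
      have hlen : ((s.drop k).take t).length = t := by
        simp only [List.length_take, List.length_drop]; omega
      intro hnil
      rw [hnil] at hlen
      simp only [List.length_nil] at hlen
      omega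
    · exact ih (k + t) (fun x hx => hmem x (List.mem_cons_of_mem _ hx)) p hp

lemma cutL_multiset (s : List α) (L : List (ℕ × ℕ)) : ∀ i : ℕ,
    (↑(cutL s i L) : Multiset (List α))
      = ↑(L.map (fun x => (s.drop x.1).take x.2)) + ↑((uncov s i L).map ([·])) := by
  induction L with
  | nil => intro i; simp [cutL, uncov]
  | cons x L ih =>
    obtain ⟨k, t⟩ := x
    intro i
    simp only [cutL, uncov, List.map_cons, List.map_append,
      ← Multiset.coe_add, ← Multiset.cons_coe, ih (k + t)]
    simp only [← Multiset.singleton_add]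
    abel

lemma uncov_chars (s : List α) (L : List (ℕ × ℕ)) : ∀ i : ℕ,
    (∀ x ∈ L, x.1 + x.2 ≤ s.length) → (∀ x ∈ L, i ≤ x.1) →
    L.Pairwise (fun x y => x.1 + x.2 ≤ y.1) →
    (↑(uncov s i L) : Multiset α)
      + ↑((L.map (fun x => (s.drop x.1).take x.2)).flatten) = ↑(s.drop i) := by
  induction L with
  | nil => intro i _ _ _; simp [uncov]
  | cons x L ih =>
    obtain ⟨k, t⟩ := x
    intro i hmem hlb hpw
    have hkt := hmem (k, t) (List.mem_cons_self)
    have hik : i ≤ k := hlb (k, t) (List.mem_cons_self)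
    have hrec := ih (k + t)
      (fun x hx => hmem x (List.mem_cons_of_mem _ hx))
      (fun x hx => (List.pairwise_cons.1 hpw).1 x hx)
      (List.pairwise_cons.1 hpw).2
    have e1 : (s.drop i).drop (k - i) = s.drop k := by
      rw [List.drop_drop]; congr 1; omega
    have e2 : (s.drop k).drop t = s.drop (k + t) := by
      rw [List.drop_drop]
    conv_rhs => rw [← List.take_append_drop (k - i) (s.drop i), e1,
      ← List.take_append_drop t (s.drop k), e2]
    simp only [uncov, List.map_cons, List.flatten_cons, ← Multiset.coe_add]
    rw [← hrec]
    abel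

lemma exists_sorted (f : ℕ × ℕ × ℕ → ℕ) (T : Finset (ℕ × ℕ × ℕ))
    (hdisj : ∀ b ∈ T, ∀ b' ∈ T, b ≠ b' → f b + b.2.2 ≤ f b' ∨ f b' + b'.2.2 ≤ f b)
    (ht : ∀ b ∈ T, 1 ≤ b.2.2) :
    ∃ l : List (ℕ × ℕ × ℕ), l.Perm T.toList ∧
      l.Pairwise (fun b b' => f b + b.2.2 ≤ f b') := by
  induction T using Finset.strongInduction with
  | _ T ih =>
    rcases T.eq_empty_or_nonempty with rfl | hT
    · exact ⟨[], by simp, List.Pairwise.nil⟩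
    · obtain ⟨b, hbT, hbmin⟩ := T.exists_min_image f hT
      obtain ⟨l', hl'perm, hl'pw⟩ := ih (T.erase b) (Finset.erase_ssubset hbT)
        (fun c hc c' hc' => hdisj c (Finset.mem_of_mem_erase hc) c' (Finset.mem_of_mem_erase hc'))
        (fun c hc => ht c (Finset.mem_of_mem_erase hc))
      refine ⟨b :: l', ?_, ?_⟩
      · have hins : T = insert b (T.erase b) := (Finset.insert_erase hbT).symm
        have h1 : T.toList.Perm (b :: (T.erase b).toList) := by
          conv_lhs => rw [hins]
          exact Finset.toList_insert (Finset.notMem_erase b T)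
        exact (hl'perm.cons b).trans h1.symm
      · refine List.pairwise_cons.2 ⟨?_, hl'pw⟩
        intro c hc
        have hcT : c ∈ T.erase b := by
          have := hl'perm.mem_iff.1 hc
          rwa [Finset.mem_toList] at this
        have hne : b ≠ c := fun h => (Finset.ne_of_mem_erase hcT) h.symm
        have h1 := hdisj b hbT c (Finset.mem_of_mem_erase hcT) hne
        have h2 := hbmin c (Finset.mem_of_mem_erase hcT)
        have h3 := ht c (Finset.mem_of_mem_erase hcT)
        omega

/-- Direction B: non-overlapping blocks yield a common partition. -/
lemma blocks_to_partition (s₁ s₂ : List α) (hrel : s₁.Perm s₂)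
    (T : Finset (ℕ × ℕ × ℕ))
    (hb : ∀ b ∈ T, IsBlock s₁ s₂ b ∧ 2 ≤ b.2.2)
    (hov : ∀ b ∈ T, ∀ b' ∈ T, b ≠ b' → ¬ Overlap b b') :
    ∃ P₁ P₂ : List (List α), CommonPartition s₁ s₂ P₁ P₂ ∧
      P₁.length + ∑ b ∈ T, (b.2.2 - 1) = s₁.length := by
  have ht1 : ∀ b ∈ T, 1 ≤ b.2.2 := fun b hbT => le_trans one_le_two (hb b hbT).2
  have hdisj1 : ∀ b ∈ T, ∀ b' ∈ T, b ≠ b' → b.1 + b.2.2 ≤ b'.1 ∨ b'.1 + b'.2.2 ≤ b.1 := by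
    intro b hbb b' hbb' hne
    have := hov b hbb b' hbb' hne
    unfold Overlap at this; omega
  have hdisj2 : ∀ b ∈ T, ∀ b' ∈ T, b ≠ b' →
      b.2.1 + b.2.2 ≤ b'.2.1 ∨ b'.2.1 + b'.2.2 ≤ b.2.1 := by
    intro b hbb b' hbb' hne
    have := hov b hbb b' hbb' hne
    unfold Overlap at this; omega
  obtain ⟨l₁, hl₁perm, hl₁pw⟩ := exists_sorted (fun b => b.1) T hdisj1 ht1
  obtain ⟨l₂, hl₂perm, hl₂pw⟩ := exists_sorted (fun b => b.2.1) T hdisj2 ht1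
  have hl₁T : ∀ b ∈ l₁, b ∈ T := fun b hbb =>
    Finset.mem_toList.1 (hl₁perm.mem_iff.1 hbb)
  have hl₂T : ∀ b ∈ l₂, b ∈ T := fun b hbb =>
    Finset.mem_toList.1 (hl₂perm.mem_iff.1 hbb)
  set m₁ : List (ℕ × ℕ) := l₁.map (fun b => (b.1, b.2.2)) with hm₁
  set m₂ : List (ℕ × ℕ) := l₂.map (fun b => (b.2.1, b.2.2)) with hm₂
  have hm₁mem : ∀ x ∈ m₁, x.1 + x.2 ≤ s₁.length ∧ 1 ≤ x.2 := by
    intro x hx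
    obtain ⟨c, hc, rfl⟩ := List.mem_map.1 hx
    exact ⟨(hb c (hl₁T c hc)).1.2.1, ht1 c (hl₁T c hc)⟩
  have hm₂mem : ∀ x ∈ m₂, x.1 + x.2 ≤ s₂.length ∧ 1 ≤ x.2 := by
    intro x hx
    obtain ⟨c, hc, rfl⟩ := List.mem_map.1 hx
    exact ⟨(hb c (hl₂T c hc)).1.2.2.1, ht1 c (hl₂T c hc)⟩
  have hm₁pw : m₁.Pairwise (fun x y => x.1 + x.2 ≤ y.1) :=
    List.pairwise_map.2 (hl₁pw.imp (fun h => h))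
  have hm₂pw : m₂.Pairwise (fun x y => x.1 + x.2 ≤ y.1) :=
    List.pairwise_map.2 (hl₂pw.imp (fun h => h))
  have hm₁lb : ∀ x ∈ m₁, 0 ≤ x.1 := fun x _ => Nat.zero_le _
  have hm₂lb : ∀ x ∈ m₂, 0 ≤ x.1 := fun x _ => Nat.zero_le _
  refine ⟨cutL s₁ 0 m₁, cutL s₂ 0 m₂, ⟨?_, ?_, ?_, ?_⟩, ?_⟩
  · -- perm
    have hc₁ := cutL_multiset s₁ m₁ 0
    have hc₂ := cutL_multiset s₂ m₂ 0
    have hmm₁ : m₁.map (fun x => (s₁.drop x.1).take x.2)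
        = l₁.map (fun b => (s₁.drop b.1).take b.2.2) := by
      rw [hm₁, List.map_map]; rfl
    have hmm₂ : m₂.map (fun x => (s₂.drop x.1).take x.2)
        = l₂.map (fun b => (s₂.drop b.2.1).take b.2.2) := by
      rw [hm₂, List.map_map]; rfl
    have hpieces : (l₁.map (fun b => (s₁.drop b.1).take b.2.2)).Perm
        (l₂.map (fun b => (s₂.drop b.2.1).take b.2.2)) := by
      have h12 : l₁.Perm l₂ := hl₁perm.trans hl₂perm.symm
      have := h12.map (fun b => (s₁.drop b.1).take b.2.2)
      refine this.trans ?_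
      rw [List.map_congr_left]
      intro c hc
      exact ((hb c (hl₂T c hc)).1.2.2.2)
    have hu₁ := uncov_chars s₁ m₁ 0 (fun x hx => (hm₁mem x hx).1) hm₁lb hm₁pw
    have hu₂ := uncov_chars s₂ m₂ 0 (fun x hx => (hm₂mem x hx).1) hm₂lb hm₂pw
    have hflat : (↑((m₁.map (fun x => (s₁.drop x.1).take x.2)).flatten) : Multiset α)
        = ↑((m₂.map (fun x => (s₂.drop x.1).take x.2)).flatten) := by
      rw [hmm₁, hmm₂]
      exact Multiset.coe_eq_coe.2 hpieces.flatten
    have hs : (↑(s₁.drop 0) : Multiset α) = ↑(s₂.drop 0) := by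
      simpa using Multiset.coe_eq_coe.2 hrel
    have huncov : (↑(uncov s₁ 0 m₁) : Multiset α) = ↑(uncov s₂ 0 m₂) := by
      have h := hu₁.trans (hs.trans hu₂.symm)
      rw [hflat] at h
      exact add_right_cancel h
    have huncovperm : (uncov s₁ 0 m₁).Perm (uncov s₂ 0 m₂) := Multiset.coe_eq_coe.1 huncov
    refine Multiset.coe_eq_coe.1 ?_
    rw [hc₁, hc₂, hmm₁, hmm₂]
    rw [Multiset.coe_eq_coe.2 hpieces, Multiset.coe_eq_coe.2 (huncovperm.map _)]
  · exact cutL_ne_nil s₁ m₁ 0 hm₁mem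
  · rw [cutL_flatten s₁ m₁ 0 (fun x hx => (hm₁mem x hx).1) hm₁lb hm₁pw]; simp
  · rw [cutL_flatten s₂ m₂ 0 (fun x hx => (hm₂mem x hx).1) hm₂lb hm₂pw]; simp
  · have hl := cutL_length s₁ m₁ 0 (Nat.zero_le _) hm₁mem hm₁lb hm₁pw
    have hsum : (m₁.map (fun x => x.2 - 1)).sum = ∑ b ∈ T, (b.2.2 - 1) := by
      rw [hm₁, List.map_map]
      have : (l₁.map ((fun x : ℕ × ℕ => x.2 - 1) ∘ (fun b : ℕ × ℕ × ℕ => (b.1, b.2.2))))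
          = l₁.map (fun b => b.2.2 - 1) := rfl
      rw [this]
      have hp := hl₁perm.map (fun b : ℕ × ℕ × ℕ => b.2.2 - 1)
      rw [hp.sum_eq, Finset.sum_map_toList]
    rw [hsum] at hl
    omega

end MCSPAux

/-- The minimum size of a common partition of related strings of length `n` equals
`n − M`, where `M` is the maximum of `Σ_{b∈T} (t_b − 1)` over all finite sets `T` of
pairwise non-overlapping blocks of length at least `2`. -/
theorem min_commonPartition_eq {α : Type*} (s₁ s₂ : List α) (n : ℕ)
    (h₁ : s₁.length = n) (h₂ : s₂.length = n) (hrel : s₁.Perm s₂) :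
    ∃ M : ℕ,
      IsGreatest {k : ℕ | ∃ T : Finset (ℕ × ℕ × ℕ),
          (∀ b ∈ T, IsBlock s₁ s₂ b ∧ 2 ≤ b.2.2) ∧
          (∀ b ∈ T, ∀ b' ∈ T, b ≠ b' → ¬ Overlap b b') ∧
          k = ∑ b ∈ T, (b.2.2 - 1)} M ∧
      IsLeast {m : ℕ | ∃ P₁ P₂ : List (List α),
          CommonPartition s₁ s₂ P₁ P₂ ∧ P₁.length = m} (n - M) := by
  classical
  set S : Set ℕ := {k : ℕ | ∃ T : Finset (ℕ × ℕ × ℕ),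
      (∀ b ∈ T, IsBlock s₁ s₂ b ∧ 2 ≤ b.2.2) ∧
      (∀ b ∈ T, ∀ b' ∈ T, b ≠ b' → ¬ Overlap b b') ∧
      k = ∑ b ∈ T, (b.2.2 - 1)} with hS
  have h0 : (0 : ℕ) ∈ S := ⟨∅, by simp, by simp, by simp⟩
  have hub : ∀ k ∈ S, k ≤ n := by
    rintro k ⟨T, hT1, hT2, rfl⟩
    obtain ⟨P₁, P₂, _, hlen⟩ := MCSPAux.blocks_to_partition s₁ s₂ hrel T hT1 hT2
    omega
  have hbdd : BddAbove S := ⟨n, fun k hk => hub k hk⟩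
  refine ⟨sSup S, ⟨Nat.sSup_mem ⟨0, h0⟩ hbdd, fun k hk => le_csSup hbdd hk⟩, ?_, ?_⟩
  · obtain ⟨T, hT1, hT2, hMe⟩ := Nat.sSup_mem (⟨0, h0⟩ : S.Nonempty) hbdd
    obtain ⟨P₁, P₂, hcp, hlen⟩ := MCSPAux.blocks_to_partition s₁ s₂ hrel T hT1 hT2
    exact ⟨P₁, P₂, hcp, by omega⟩
  · rintro m ⟨P₁, P₂, hcp, rfl⟩
    obtain ⟨T, hT1, hT2, hsum⟩ := MCSPAux.partition_to_blocks s₁ s₂ P₁ P₂ hcp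
    have hmem : ∑ b ∈ T, (b.2.2 - 1) ∈ S := ⟨T, hT1, hT2, rfl⟩
    have hle := le_csSup hbdd hmem
    omega
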